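/- Let W, Z, S be random variables with values in finite sets such that W is independent of the pair (Z, S), and let X = f(W, Z) for some function f. If H(W | X, Z, S) = 0, then H(X | Z) ≥ H(W). Moreover, under the same hypotheses, H(W | X, Z) = 0. -/

import Mathlib

/-- The probability that the finitely-valued random variable `X` (on the finite
probability space with mass function `P`) takes the value `a`. -/
noncomputable def rvDist {Ω α : Type*} [Fintype Ω] [DecidableEq α]
    (P : Ω → ℝ) (X : Ω → α) (a : α) : ℝ :=
  ∑ ω : Ω, if X ω = a then P ω else 0

/-- Shannon entropy of a finitely-valued random variable (in nats, with the
convention `0 log 0 = 0`, which holds since `Real.log 0 = 0`). -/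
noncomputable def rvEntropy {Ω α : Type*} [Fintype Ω] [Fintype α] [DecidableEq α]
    (P : Ω → ℝ) (X : Ω → α) : ℝ :=
  -∑ a : α, rvDist P X a * Real.log (rvDist P X a)

/-- Conditional Shannon entropy `H(X | Y) = H(X, Y) - H(Y)`. -/
noncomputable def rvCondEntropy {Ω α β : Type*} [Fintype Ω] [Fintype α] [Fintype β]
    [DecidableEq α] [DecidableEq β] (P : Ω → ℝ) (X : Ω → α) (Y : Ω → β) : ℝ :=
  rvEntropy P (fun ω => (X ω, Y ω)) - rvEntropy P Y



section aux
variable {Ω α β γ : Type*} [Fintype Ω] [DecidableEq α] [DecidableEq β] [DecidableEq γ]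

lemma rvDist_nonneg (P : Ω → ℝ) (hP : ∀ ω, 0 ≤ P ω) (X : Ω → α) (a : α) :
    0 ≤ rvDist P X a :=
  Finset.sum_nonneg fun ω _ => by split <;> simp [hP ω]

lemma rvDist_sum [Fintype α] (P : Ω → ℝ) (X : Ω → α) :
    ∑ a : α, rvDist P X a = ∑ ω : Ω, P ω := by
  unfold rvDist
  rw [Finset.sum_comm]
  simp [Finset.sum_ite_eq]

lemma le_rvDist (P : Ω → ℝ) (hP : ∀ ω, 0 ≤ P ω) (X : Ω → α) (ω : Ω) :
    P ω ≤ rvDist P X (X ω) := by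
  classical
  have := Finset.single_le_sum (f := fun ω' => if X ω' = X ω then P ω' else 0)
    (fun ω' _ => by by_cases h : X ω' = X ω <;> simp [h, hP ω']) (Finset.mem_univ ω)
  simpa [rvDist] using this

lemma rvDist_fst [Fintype β] (P : Ω → ℝ) (A : Ω → α) (B : Ω → β) (a : α) :
    rvDist P A a = ∑ b : β, rvDist P (fun ω => (A ω, B ω)) (a, b) := by
  unfold rvDist
  rw [Finset.sum_comm]
  congr 1; ext ω
  simp [Prod.ext_iff, ite_and, Finset.sum_ite_eq]

lemma rvDist_snd [Fintype α] (P : Ω → ℝ) (A : Ω → α) (B : Ω → β) (b : β) :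
    rvDist P B b = ∑ a : α, rvDist P (fun ω => (A ω, B ω)) (a, b) := by
  unfold rvDist
  rw [Finset.sum_comm]
  congr 1; ext ω
  by_cases h : B ω = b <;> simp [Prod.ext_iff, ite_and, h, Finset.sum_ite_eq]

lemma rvDist_pos_elim (P : Ω → ℝ) (hP : ∀ ω, 0 ≤ P ω) (X : Ω → α) (a : α)
    (h : 0 < rvDist P X a) : ∃ ω, 0 < P ω ∧ X ω = a := by
  by_contra hc
  push_neg at hc
  have hz : rvDist P X a = 0 := by
    unfold rvDist
    refine Finset.sum_eq_zero fun ω _ => ?_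
    by_cases h' : X ω = a
    · simp only [h', if_true]
      by_contra hne
      exact hc ω (lt_of_le_of_ne (hP ω) (Ne.symm hne)) h'
    · simp [h']
  linarith

end aux

section collapse
variable {ι κ : Type*} [Fintype ι] [Fintype κ] [DecidableEq κ]

lemma F_sum_subsingleton (g : ι → ℝ) (hg : ∀ i, 0 ≤ g i)
    (h : ∀ i j, 0 < g i → 0 < g j → i = j) :
    (∑ i, g i) * Real.log (∑ i, g i) = ∑ i, g i * Real.log (g i) := by
  by_cases hz : ∀ i, g i = 0
  · simp [hz]
  · push_neg at hz; obtain ⟨i₀, hi₀⟩ := hz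
    have hpos : 0 < g i₀ := lt_of_le_of_ne (hg i₀) (Ne.symm hi₀)
    have hzero : ∀ j, j ≠ i₀ → g j = 0 := fun j hj => by
      by_contra hne
      exact hj (h j i₀ (lt_of_le_of_ne (hg j) (Ne.symm hne)) hpos)
    have hs : (∑ i, g i) = g i₀ :=
      Finset.sum_eq_single i₀ (fun j _ hj => hzero j hj) (by simp)
    rw [hs, Finset.sum_eq_single i₀ (fun j _ hj => by simp [hzero j hj]) (by simp)]

lemma sum_fiber_mul_log (φ : ι → κ) (g : ι → ℝ) (hg : ∀ i, 0 ≤ g i)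
    (hinj : ∀ i j, 0 < g i → 0 < g j → φ i = φ j → i = j) :
    ∑ k : κ, (∑ i : ι, if φ i = k then g i else 0) *
        Real.log (∑ i : ι, if φ i = k then g i else 0)
      = ∑ i : ι, g i * Real.log (g i) := by
  have key : ∀ k : κ, (∑ i : ι, if φ i = k then g i else 0) *
      Real.log (∑ i : ι, if φ i = k then g i else 0)
      = ∑ i : ι, if φ i = k then g i * Real.log (g i) else 0 := by
    intro k
    have h1 := F_sum_subsingleton (g := fun i => if φ i = k then g i else 0)
      (fun i => by by_cases h : φ i = k <;> simp [h, hg i])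
      (fun i j hi hj => by
        by_cases hik : φ i = k
        · by_cases hjk : φ j = k
          · exact hinj i j (by simpa [hik] using hi) (by simpa [hjk] using hj)
              (hik.trans hjk.symm)
          · simp [hjk] at hj
        · simp [hik] at hi)
    rw [h1]
    congr 1; ext i
    by_cases h : φ i = k <;> simp [h]
  rw [Finset.sum_congr rfl (fun k _ => key k), Finset.sum_comm]
  congr 1; ext i
  simp [Finset.sum_ite_eq]

end collapse



lemma determinism {Ω α β : Type*} [Fintype Ω] [Fintype α] [Fintype β]
    [DecidableEq α] [DecidableEq β]
    (P : Ω → ℝ) (hP : ∀ ω, 0 ≤ P ω) (W : Ω → α) (Y : Ω → β)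
    (h0 : rvCondEntropy P W Y = 0) :
    ∀ ω ω', 0 < P ω → 0 < P ω' → Y ω = Y ω' → W ω = W ω' := by
  classical
  set j : α × β → ℝ := rvDist P (fun ω => (W ω, Y ω)) with hj
  set m : β → ℝ := rvDist P Y with hm
  have hjnn : ∀ p, 0 ≤ j p := fun p => rvDist_nonneg P hP _ p
  have hmarg : ∀ y, m y = ∑ w : α, j (w, y) := fun y => rvDist_snd P W Y y
  have hle : ∀ w y, j (w, y) ≤ m y := by
    intro w y
    rw [hmarg y]
    exact Finset.single_le_sum (f := fun w => j (w, y)) (fun w _ => hjnn _)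
      (Finset.mem_univ w)
  -- the sum of nonnegative gaps is zero
  have hsum : ∑ y : β, ∑ w : α, j (w, y) * (Real.log (m y) - Real.log (j (w, y))) = 0 := by
    have h1 : ∑ y : β, m y * Real.log (m y)
        = ∑ y : β, ∑ w : α, j (w, y) * Real.log (m y) := by
      refine Finset.sum_congr rfl fun y _ => ?_
      rw [hmarg y, Finset.sum_mul]
    have h2 : rvEntropy P (fun ω => (W ω, Y ω)) - rvEntropy P Y = 0 := h0
    unfold rvEntropy at h2
    have h3 : ∑ p : α × β, j p * Real.log (j p) = ∑ y : β, m y * Real.log (m y) := by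
      have := h2
      rw [neg_sub_neg] at this
      linarith [this]
    rw [Fintype.sum_prod_type, Finset.sum_comm] at h3
    simp only [mul_sub]
    rw [Finset.sum_congr rfl fun y (_ : y ∈ Finset.univ) =>
      (Finset.sum_sub_distrib (s := Finset.univ) _ _)]
    rw [Finset.sum_sub_distrib, ← h1]
    linarith [h3]

  have hterm : ∀ w y, 0 < j (w, y) → m y = j (w, y) := by
    intro w y hpos
    have hnn : ∀ y ∈ Finset.univ (α := β), 0 ≤ ∑ w : α, j (w, y) *
        (Real.log (m y) - Real.log (j (w, y))) := by
      intro y _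
      refine Finset.sum_nonneg fun w _ => ?_
      rcases lt_or_eq_of_le (hjnn (w, y)) with hp | hp
      · have : Real.log (j (w, y)) ≤ Real.log (m y) :=
          Real.log_le_log hp (hle w y)
        nlinarith
      · simp [← hp]
    have hz := (Finset.sum_eq_zero_iff_of_nonneg hnn).mp hsum y (Finset.mem_univ y)
    have hnn2 : ∀ w ∈ Finset.univ (α := α), 0 ≤ j (w, y) *
        (Real.log (m y) - Real.log (j (w, y))) := by
      intro w _
      rcases lt_or_eq_of_le (hjnn (w, y)) with hp | hp
      · have : Real.log (j (w, y)) ≤ Real.log (m y) :=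
          Real.log_le_log hp (hle w y)
        nlinarith
      · simp [← hp]
    have hz2 := (Finset.sum_eq_zero_iff_of_nonneg hnn2).mp hz w (Finset.mem_univ w)
    have hlog : Real.log (m y) = Real.log (j (w, y)) := by
      rcases mul_eq_zero.mp hz2 with h | h
      · exact absurd h (ne_of_gt hpos)
      · linarith [sub_eq_zero.mp h]
    have hmpos : 0 < m y := lt_of_lt_of_le hpos (hle w y)
    have := congrArg Real.exp hlog
    rwa [Real.exp_log hmpos, Real.exp_log hpos] at this
  intro ω ω' hω hω' hY
  by_contra hW
  have hj1 : 0 < j (W ω, Y ω) := lt_of_lt_of_le hω (le_rvDist P hP (fun ω => (W ω, Y ω)) ω)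
  have hj2 : 0 < j (W ω', Y ω) := by
    have := le_rvDist P hP (fun ω => (W ω, Y ω)) ω'
    rw [← hY] at this
    exact lt_of_lt_of_le hω' this
  have hsum2 : j (W ω, Y ω) + j (W ω', Y ω) ≤ m (Y ω) := by
    rw [hmarg]
    have hsub : ({W ω, W ω'} : Finset α) ⊆ Finset.univ := Finset.subset_univ _
    calc j (W ω, Y ω) + j (W ω', Y ω) = ∑ w ∈ ({W ω, W ω'} : Finset α), j (w, Y ω) := by
          rw [Finset.sum_pair hW]
      _ ≤ ∑ w : α, j (w, Y ω) :=
          Finset.sum_le_sum_of_subset_of_nonneg hsub (fun w _ _ => hjnn _)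
  have := hterm (W ω) (Y ω) hj1
  linarith

section more
variable {Ω α β γ : Type*} [Fintype Ω] [DecidableEq α] [DecidableEq β] [DecidableEq γ]

lemma rvDist_proj3 [Fintype γ] (P : Ω → ℝ) (A : Ω → α) (B : Ω → β) (C : Ω → γ)
    (a : α) (b : β) :
    rvDist P (fun ω => (A ω, B ω)) (a, b)
      = ∑ c : γ, rvDist P (fun ω => (A ω, B ω, C ω)) (a, b, c) := by
  unfold rvDist
  rw [Finset.sum_comm]
  congr 1; ext ω
  by_cases h1 : A ω = a <;> by_cases h2 : B ω = b <;>
    simp [Prod.ext_iff, ite_and, h1, h2, Finset.sum_ite_eq]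

lemma pos_parts {a b : ℝ} (ha : 0 ≤ a) (hb : 0 ≤ b) (h : 0 < a * b) :
    0 < a ∧ 0 < b :=
  ⟨ha.lt_of_ne fun h0 => by simp [← h0] at h,
   hb.lt_of_ne fun h0 => by simp [← h0] at h⟩

end more

/-- Let `W` be independent of the pair `(Z, S)` and let
`X = f(W, Z)`. If `H(W | X, Z, S) = 0`, then `H(X | Z) ≥ H(W)`; moreover
`H(W | X, Z) = 0`. -/
theorem stmt16 {Ω σW σZ σS σX : Type*} [Fintype Ω] [Fintype σW] [Fintype σZ]
    [Fintype σS] [Fintype σX] [DecidableEq σW] [DecidableEq σZ] [DecidableEq σS]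
    [DecidableEq σX]
    (P : Ω → ℝ) (hP : ∀ ω, 0 ≤ P ω) (hP1 : ∑ ω : Ω, P ω = 1)
    (W : Ω → σW) (Z : Ω → σZ) (S : Ω → σS)
    (f : σW → σZ → σX) (X : Ω → σX) (hX : X = fun ω => f (W ω) (Z ω))
    (hInd : ∀ (w : σW) (z : σZ) (s : σS),
      rvDist P (fun ω => (W ω, Z ω, S ω)) (w, z, s)
        = rvDist P W w * rvDist P (fun ω => (Z ω, S ω)) (z, s))
    (h0 : rvCondEntropy P W (fun ω => (X ω, Z ω, S ω)) = 0) :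
    rvEntropy P W ≤ rvCondEntropy P X Z ∧
      rvCondEntropy P W (fun ω => (X ω, Z ω)) = 0 := by
  classical
  set pW : σW → ℝ := rvDist P W with hpW
  set pZ : σZ → ℝ := rvDist P Z with hpZ
  set pZS : σZ × σS → ℝ := rvDist P (fun ω => (Z ω, S ω)) with hpZS
  have hWnn : ∀ w, 0 ≤ pW w := fun w => rvDist_nonneg P hP W w
  have hZnn : ∀ z, 0 ≤ pZ z := fun z => rvDist_nonneg P hP Z z
  have hdet := determinism P hP W (fun ω => (X ω, Z ω, S ω)) h0
  have hZmarg : ∀ z, pZ z = ∑ s : σS, pZS (z, s) := fun z => rvDist_fst P Z S z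
  -- joint of (W, Z) is a product
  have hWZ : ∀ w z, rvDist P (fun ω => (W ω, Z ω)) (w, z) = pW w * pZ z := by
    intro w z
    rw [rvDist_proj3 P W Z S w z]
    rw [Finset.sum_congr rfl fun s _ => hInd w z s, ← Finset.mul_sum, hZmarg z]
  -- injectivity of f (·, z) on the support of W, for z in the support of Z
  have hinj : ∀ w w' z, 0 < pW w → 0 < pW w' → 0 < pZ z → f w z = f w' z → w = w' := by
    intro w w' z hw hw' hz hf
    obtain ⟨s, hs⟩ : ∃ s, 0 < pZS (z, s) := by
      by_contra hc
      push_neg at hc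
      have hzz : ∀ s, pZS (z, s) = 0 :=
        fun s => le_antisymm (hc s) (rvDist_nonneg P hP _ _)
      rw [hZmarg z] at hz
      simp [hzz] at hz
    have h1 : 0 < rvDist P (fun ω => (W ω, Z ω, S ω)) (w, z, s) := by
      rw [hInd]; exact mul_pos hw hs
    have h2 : 0 < rvDist P (fun ω => (W ω, Z ω, S ω)) (w', z, s) := by
      rw [hInd]; exact mul_pos hw' hs
    obtain ⟨ω, hω, hωv⟩ := rvDist_pos_elim P hP _ _ h1
    obtain ⟨ω', hω', hωv'⟩ := rvDist_pos_elim P hP _ _ h2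
    simp only [Prod.mk.injEq] at hωv hωv'
    obtain ⟨hw1, hz1, hs1⟩ := hωv
    obtain ⟨hw2, hz2, hs2⟩ := hωv'
    have hYeq : (X ω, Z ω, S ω) = (X ω', Z ω', S ω') := by
      simp only [hX]
      rw [hw1, hz1, hs1, hw2, hz2, hs2, hf]
    have := hdet ω ω' hω hω' hYeq
    rw [hw1, hw2] at this
    exact this
  -- distribution of (X, Z)
  have hXZ : ∀ x z, rvDist P (fun ω => (X ω, Z ω)) (x, z)
      = ∑ w : σW, if f w z = x then pW w * pZ z else 0 := by
    intro x z
    have step1 : rvDist P (fun ω => (X ω, Z ω)) (x, z)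
        = ∑ w : σW, ∑ ω : Ω, if W ω = w ∧ f w z = x ∧ Z ω = z then P ω else 0 := by
      rw [Finset.sum_comm]
      unfold rvDist
      refine Finset.sum_congr rfl fun ω _ => ?_
      by_cases hz : Z ω = z
      · subst hz
        by_cases hx : X ω = x <;>
          simp [Prod.ext_iff, hx, ite_and, Finset.sum_ite_eq, Finset.sum_ite_eq', hX]
      · simp [Prod.ext_iff, hz, ite_and]
    rw [step1]
    refine Finset.sum_congr rfl fun w _ => ?_
    by_cases hfx : f w z = x
    · simp only [hfx, if_true]
      rw [← hWZ w z]
      unfold rvDist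
      refine Finset.sum_congr rfl fun ω _ => ?_
      simp [hfx, Prod.ext_iff]
    · simp [hfx]
  -- distribution of (W, X, Z)
  have hWXZ : ∀ w x z, rvDist P (fun ω => (W ω, X ω, Z ω)) (w, x, z)
      = if f w z = x then pW w * pZ z else 0 := by
    intro w x z
    by_cases hfx : f w z = x
    · simp only [hfx, if_true]
      rw [← hWZ w z]
      unfold rvDist
      refine Finset.sum_congr rfl fun ω _ => ?_
      by_cases hw : W ω = w <;> by_cases hz : Z ω = z <;>
        simp [Prod.ext_iff, hw, hz, hX, hfx]
    · simp only [hfx, if_false]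
      unfold rvDist
      refine Finset.sum_eq_zero fun ω _ => ?_
      by_cases hw : W ω = w <;> by_cases hz : Z ω = z <;>
        simp [Prod.ext_iff, hw, hz, hX, hfx]
  set E : ℝ := ∑ w : σW, ∑ z : σZ, (pW w * pZ z) * Real.log (pW w * pZ z) with hE
  have hHXZ : rvEntropy P (fun ω => (X ω, Z ω)) = -E := by
    unfold rvEntropy
    congr 1
    have hE2 : E = ∑ z : σZ, ∑ w : σW, (pW w * pZ z) * Real.log (pW w * pZ z) := by
      rw [hE]; exact Finset.sum_comm
    rw [Fintype.sum_prod_type, hE2]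
    conv_lhs => rw [Finset.sum_comm]
    refine Finset.sum_congr rfl fun z _ => ?_
    have hcoll := sum_fiber_mul_log (fun w => f w z) (fun w => pW w * pZ z)
      (fun w => mul_nonneg (hWnn w) (hZnn z))
      (fun w w' hw hw' hf => by
        obtain ⟨hw1, hz1⟩ := pos_parts (hWnn w) (hZnn z) hw
        obtain ⟨hw2, _⟩ := pos_parts (hWnn w') (hZnn z) hw'
        exact hinj w w' z hw1 hw2 hz1 hf)
    rw [← hcoll]
    refine Finset.sum_congr rfl fun x _ => ?_
    rw [hXZ x z]
  have hHWXZ : rvEntropy P (fun ω => (W ω, X ω, Z ω)) = -E := by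
    unfold rvEntropy
    congr 1
    rw [Fintype.sum_prod_type, hE]
    refine Finset.sum_congr rfl fun w _ => ?_
    rw [Fintype.sum_prod_type, Finset.sum_comm]
    refine Finset.sum_congr rfl fun z _ => ?_
    rw [Finset.sum_congr rfl fun x (_ : x ∈ Finset.univ) => by rw [hWXZ w x z]]
    have hite : ∀ x : σX,
        (if f w z = x then pW w * pZ z else 0) *
          Real.log (if f w z = x then pW w * pZ z else 0)
        = if f w z = x then (pW w * pZ z) * Real.log (pW w * pZ z) else 0 := by
      intro x
      by_cases h : f w z = x <;> simp [h]
    rw [Finset.sum_congr rfl fun x (_ : x ∈ Finset.univ) => hite x]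
    simp [Finset.sum_ite_eq]
  have hsumW : ∑ w : σW, pW w = 1 := by rw [hpW, rvDist_sum]; exact hP1
  have hsumZ : ∑ z : σZ, pZ z = 1 := by rw [hpZ, rvDist_sum]; exact hP1
  have hEsplit : E = (∑ w : σW, pW w * Real.log (pW w))
      + (∑ z : σZ, pZ z * Real.log (pZ z)) := by
    have hterm : ∀ w z, (pW w * pZ z) * Real.log (pW w * pZ z)
        = pZ z * (pW w * Real.log (pW w)) + pW w * (pZ z * Real.log (pZ z)) := by
      intro w z
      rcases eq_or_lt_of_le (hWnn w) with h | h
      · simp [← h]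
      rcases eq_or_lt_of_le (hZnn z) with h2 | h2
      · simp [← h2]
      rw [Real.log_mul (ne_of_gt h) (ne_of_gt h2)]
      ring
    have h1 : E = (∑ w : σW, (∑ z : σZ, pZ z) * (pW w * Real.log (pW w)))
        + (∑ w : σW, pW w * (∑ z : σZ, pZ z * Real.log (pZ z))) := by
      rw [hE]
      rw [Finset.sum_congr rfl fun w (_ : w ∈ Finset.univ) =>
        Finset.sum_congr rfl fun z (_ : z ∈ Finset.univ) => hterm w z]
      rw [← Finset.sum_add_distrib]
      refine Finset.sum_congr rfl fun w _ => ?_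
      rw [Finset.sum_add_distrib, ← Finset.sum_mul, ← Finset.mul_sum]
    rw [h1, hsumZ, ← Finset.sum_mul, hsumW]
    simp
  constructor
  · unfold rvCondEntropy
    rw [hHXZ, hEsplit]
    unfold rvEntropy
    apply le_of_eq
    rw [hpW, hpZ]
    ring
  · show rvEntropy P (fun ω => (W ω, X ω, Z ω)) - rvEntropy P (fun ω => (X ω, Z ω)) = 0
    rw [hHWXZ, hHXZ]
    ring
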